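/- With the pointwise warped-product curvature data of the setup, let P be the projective curvature tensor on V, P(X₁,X₂,X₃,X₄) := R(X₁,X₂,X₃,X₄) − (1/(n−2))[S(X₂,X₃)g(X₁,X₄) − S(X₁,X₃)g(X₂,X₄)], and let P·R be formed with the g-operator of P. If P·R = L₁ Q(g,R) on V for some real number L₁, then either R̄ = 0 (the base is flat at the point) or S̃ = (κ̃/q) g̃ (the fiber is Einstein at the point). -/

import Mathlib

/- Pointwise algebraic operations used for pseudosymmetry-type curvature conditions. -/
namespace WPS

variable {V : Type} [AddCommGroup V] [Module ℝ V]

/-- The endomorphism `X ∧_A Y` given by `(X ∧_A Y) Z = A(Y,Z) X - A(X,Z) Y`. -/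
def wedge (A : V → V → ℝ) (X Y Z : V) : V := A Y Z • X - A X Z • Y

/-- `(D · H)(X₁,X₂,X₃,X₄; X,Y)` for a (0,4)-tensor `H`, where `Dop X Y` is the
curvature operator `𝒟(X,Y)` of `D`. -/
def dot4 (Dop : V → V → V → V) (H : V → V → V → V → ℝ)
    (X1 X2 X3 X4 X Y : V) : ℝ :=
  -H (Dop X Y X1) X2 X3 X4 - H X1 (Dop X Y X2) X3 X4
    - H X1 X2 (Dop X Y X3) X4 - H X1 X2 X3 (Dop X Y X4)

/-- `(D · H)(X₁,X₂; X,Y)` for a (0,2)-tensor `H`. -/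
def dot2 (Dop : V → V → V → V) (H : V → V → ℝ) (X1 X2 X Y : V) : ℝ :=
  -H (Dop X Y X1) X2 - H X1 (Dop X Y X2)

/-- The Tachibana operator `Q(A,H)` for a (0,4)-tensor `H`. -/
def Q4 (A : V → V → ℝ) (H : V → V → V → V → ℝ) :
    V → V → V → V → V → V → ℝ := dot4 (wedge A) H

/-- The Tachibana operator `Q(A,H)` for a (0,2)-tensor `H`. -/
def Q2 (A : V → V → ℝ) (H : V → V → ℝ) : V → V → V → V → ℝ := dot2 (wedge A) H

/-- Symmetric bilinear form (as a bare function). -/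
def SymBilin (A : V → V → ℝ) : Prop :=
  (∀ x y, A x y = A y x) ∧ ∀ y, IsLinearMap ℝ fun x => A x y

/-- Nondegeneracy of a bilinear form. -/
def Nondeg (g : V → V → ℝ) : Prop := ∀ x, (∀ y, g x y = 0) → x = 0

/-- Algebraic curvature tensor: multilinear, with the antisymmetries, pair symmetry
and first Bianchi identity of a Riemann curvature tensor. -/
def Curv (R : V → V → V → V → ℝ) : Prop :=
  (∀ y z w, IsLinearMap ℝ fun x => R x y z w) ∧
  (∀ x z w, IsLinearMap ℝ fun y => R x y z w) ∧
  (∀ x y w, IsLinearMap ℝ fun z => R x y z w) ∧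
  (∀ x y z, IsLinearMap ℝ fun w => R x y z w) ∧
  (∀ x y z w, R x y z w = -R y x z w) ∧
  (∀ x y z w, R x y z w = -R x y w z) ∧
  (∀ x y z w, R x y z w = R z w x y) ∧
  ∀ x y z w, R x y z w + R y z x w + R z x y w = 0

/-- The Gaussian-type tensor `G(x,y,z,w) = g(x,w) g(y,z) - g(x,z) g(y,w)`. -/
def Gten (g : V → V → ℝ) (x y z w : V) : ℝ := g x w * g y z - g x z * g y w

end WPS

theorem stmt19
    {Vb Vf : Type} [AddCommGroup Vb] [Module ℝ Vb] [FiniteDimensional ℝ Vb]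
    [AddCommGroup Vf] [Module ℝ Vf] [FiniteDimensional ℝ Vf]
    (p q : ℕ) (hp : 1 ≤ p) (hq : 1 ≤ q) (hn : 3 ≤ p + q)
    (hdb : Module.finrank ℝ Vb = p) (hdf : Module.finrank ℝ Vf = q)
    (gb : Vb → Vb → ℝ) (hgb : WPS.SymBilin gb) (hgbn : WPS.Nondeg gb)
    (gf : Vf → Vf → ℝ) (hgf : WPS.SymBilin gf) (hgfn : WPS.Nondeg gf)
    (f Δ : ℝ) (hf : 0 < f)
    (T : Vb → Vb → ℝ) (hT : WPS.SymBilin T)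
    (Tsh : Vb →ₗ[ℝ] Vb) (hTsh : ∀ x y, gb (Tsh x) y = T x y)
    (Ω : ℝ) (hΩ : Ω = -f * (((q : ℝ) - 1) * Δ + LinearMap.trace ℝ Vb Tsh))
    (Rb : Vb → Vb → Vb → Vb → ℝ) (hRb : WPS.Curv Rb)
    (Rf : Vf → Vf → Vf → Vf → ℝ) (hRf : WPS.Curv Rf)
    (Rbop : Vb → Vb → Vb → Vb) (hRbop : ∀ x y z w, gb (Rbop x y z) w = Rb x y z w)
    (Rfop : Vf → Vf → Vf → Vf) (hRfop : ∀ x y z w, gf (Rfop x y z) w = Rf x y z w)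
    (Sb : Vb → Vb → ℝ)
    (hSb : ∀ y z, ∃ E : Vb →ₗ[ℝ] Vb, (∀ x w, gb (E x) w = Rb x y z w) ∧
      Sb y z = LinearMap.trace ℝ Vb E)
    (Sf : Vf → Vf → ℝ)
    (hSf : ∀ y z, ∃ E : Vf →ₗ[ℝ] Vf, (∀ x w, gf (E x) w = Rf x y z w) ∧
      Sf y z = LinearMap.trace ℝ Vf E)
    (κf : ℝ)
    (hκf : ∃ E : Vf →ₗ[ℝ] Vf, (∀ x y, gf (E x) y = Sf x y) ∧
      κf = LinearMap.trace ℝ Vf E)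
    (gV : Vb × Vf → Vb × Vf → ℝ)
    (hgV : ∀ X Y, gV X Y = gb X.1 Y.1 + f * gf X.2 Y.2)
    (RV : Vb × Vf → Vb × Vf → Vb × Vf → Vb × Vf → ℝ)
    (hRV : ∀ X Y Z W, RV X Y Z W = Rb X.1 Y.1 Z.1 W.1
      + f * (T X.1 Z.1 * gf Y.2 W.2 + T Y.1 W.1 * gf X.2 Z.2
        - T X.1 W.1 * gf Y.2 Z.2 - T Y.1 Z.1 * gf X.2 W.2)
      + f * Rf X.2 Y.2 Z.2 W.2 - f ^ 2 * Δ * WPS.Gten gf X.2 Y.2 Z.2 W.2)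
    (SV : Vb × Vf → Vb × Vf → ℝ)
    (hSV : ∀ X Y, SV X Y = (Sb X.1 Y.1 - (q : ℝ) * T X.1 Y.1)
      + (Sf X.2 Y.2 + Ω * gf X.2 Y.2))
    (Rop : Vb × Vf → Vb × Vf → Vb × Vf → Vb × Vf)
    (hRop : ∀ X Y Z W, gV (Rop X Y Z) W = RV X Y Z W)
    (PV : Vb × Vf → Vb × Vf → Vb × Vf → Vb × Vf → ℝ)
    (hPV : ∀ X1 X2 X3 X4 : Vb × Vf, PV X1 X2 X3 X4 = RV X1 X2 X3 X4
      - 1 / (((p + q : ℕ) : ℝ) - 2) * (SV X2 X3 * gV X1 X4 - SV X1 X3 * gV X2 X4))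
    (Pop : Vb × Vf → Vb × Vf → Vb × Vf → Vb × Vf)
    (hPop : ∀ X Y Z W, gV (Pop X Y Z) W = PV X Y Z W)
    (L1 : ℝ)
    (hmain : ∀ X1 X2 X3 X4 X Y : Vb × Vf, WPS.dot4 Pop RV X1 X2 X3 X4 X Y
      = L1 * WPS.Q4 gV RV X1 X2 X3 X4 X Y) :
    (∀ x y z w : Vb, Rb x y z w = 0) ∨ (∀ a b : Vf, Sf a b = (κf / (q : ℝ)) * gf a b) := by

  classical
  obtain ⟨gbs, gbl⟩ := hgb
  obtain ⟨gfs, gfl⟩ := hgf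
  obtain ⟨Ts, Tl⟩ := hT
  obtain ⟨Rb1, Rb2, Rb3, Rb4, Rba12, Rba34, Rbp, Rbb⟩ := hRb
  obtain ⟨Rf1, Rf2, Rf3, Rf4, Rfa12, Rfa34, Rfp, Rfb⟩ := hRf
  -- zero lemmas
  have gb0l : ∀ y, gb 0 y = 0 := fun y => (gbl y).map_zero
  have gb0r : ∀ x, gb x 0 = 0 := fun x => by rw [gbs]; exact (gbl x).map_zero
  have gf0l : ∀ y, gf 0 y = 0 := fun y => (gfl y).map_zero
  have gf0r : ∀ x, gf x 0 = 0 := fun x => by rw [gfs]; exact (gfl x).map_zero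
  have T0l : ∀ y, T 0 y = 0 := fun y => (Tl y).map_zero
  have T0r : ∀ x, T x 0 = 0 := fun x => by rw [Ts]; exact (Tl x).map_zero
  have Rb01 : ∀ y z w, Rb 0 y z w = 0 := fun y z w => (Rb1 y z w).map_zero
  have Rb02 : ∀ x z w, Rb x 0 z w = 0 := fun x z w => (Rb2 x z w).map_zero
  have Rb03 : ∀ x y w, Rb x y 0 w = 0 := fun x y w => (Rb3 x y w).map_zero
  have Rb04 : ∀ x y z, Rb x y z 0 = 0 := fun x y z => (Rb4 x y z).map_zero
  have Rf01 : ∀ y z w, Rf 0 y z w = 0 := fun y z w => (Rf1 y z w).map_zero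
  have Rf02 : ∀ x z w, Rf x 0 z w = 0 := fun x z w => (Rf2 x z w).map_zero
  have Rf03 : ∀ x y w, Rf x y 0 w = 0 := fun x y w => (Rf3 x y w).map_zero
  have Rf04 : ∀ x y z, Rf x y z 0 = 0 := fun x y z => (Rf4 x y z).map_zero
  have Sb0l : ∀ z, Sb 0 z = 0 := by
    intro z
    obtain ⟨E, hE, htr⟩ := hSb 0 z
    have hE0 : E = 0 := by
      apply LinearMap.ext
      intro u
      exact hgbn (E u) (fun w => by rw [hE]; exact Rb02 u z w)
    rw [htr, hE0, map_zero]
  have Sb0r : ∀ y, Sb y 0 = 0 := by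
    intro y
    obtain ⟨E, hE, htr⟩ := hSb y 0
    have hE0 : E = 0 := by
      apply LinearMap.ext
      intro u
      exact hgbn (E u) (fun w => by rw [hE]; exact Rb03 u y w)
    rw [htr, hE0, map_zero]
  have Sf0l : ∀ z, Sf 0 z = 0 := by
    intro z
    obtain ⟨E, hE, htr⟩ := hSf 0 z
    have hE0 : E = 0 := by
      apply LinearMap.ext
      intro u
      exact hgfn (E u) (fun w => by rw [hE]; exact Rf02 u z w)
    rw [htr, hE0, map_zero]
  have Sf0r : ∀ y, Sf y 0 = 0 := by
    intro y
    obtain ⟨E, hE, htr⟩ := hSf y 0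
    have hE0 : E = 0 := by
      apply LinearMap.ext
      intro u
      exact hgfn (E u) (fun w => by rw [hE]; exact Rf03 u y w)
    rw [htr, hE0, map_zero]
  -- block evaluation lemmas for RV
  have L1 : ∀ (Z : Vb × Vf) (y z w : Vb),
      RV Z (y, 0) (z, 0) (w, 0) = Rb Z.1 y z w := by
    intro Z y z w
    rw [hRV]
    simp only [WPS.Gten, gf0l, gf0r, Rf04, mul_zero, zero_mul, sub_zero, add_zero, Rf02]
  have L2 : ∀ (b : Vf) (Z : Vb × Vf) (z w : Vb),
      RV ((0 : Vb), b) Z (z, 0) (w, 0) = 0 := by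
    intro b Z z w
    rw [hRV]
    simp only [WPS.Gten, gf0l, gf0r, T0l, Rb01, Rf03, mul_zero, zero_mul, sub_zero, add_zero]
  have L3 : ∀ (b : Vf) (y : Vb) (Z : Vb × Vf) (w : Vb),
      RV ((0 : Vb), b) (y, 0) Z (w, 0) = f * (T y w * gf b Z.2) := by
    intro b y Z w
    rw [hRV]
    simp only [WPS.Gten, gf0l, gf0r, T0l, Rb01, Rf02, mul_zero, zero_mul, sub_zero, add_zero]
    ring
  have L4 : ∀ (b : Vf) (y z : Vb) (Z : Vb × Vf),
      RV ((0 : Vb), b) (y, 0) (z, 0) Z = -(f * (T y z * gf b Z.2)) := by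
    intro b y z Z
    rw [hRV]
    simp only [WPS.Gten, gf0l, gf0r, T0l, Rb01, Rf02, mul_zero, zero_mul, sub_zero, add_zero]
    ring
  have L5 : ∀ (u y z w : Vb), Rb u y z w = -gb u (Rbop z w y) := by
    intro u y z w
    rw [Rbp u y z w, Rba34 z w u y, gbs, hRbop]
  have L6 : ∀ (X Y C : Vb × Vf) (v : Vb),
      gb (Pop X Y C).1 v = PV X Y C (v, 0) := by
    intro X Y C v
    have h := hPop X Y C (v, 0)
    rw [hgV] at h
    simpa [gf0r] using h
  have L7 : ∀ (X Y C : Vb × Vf) (b : Vf),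
      f * gf b (Pop X Y C).2 = PV X Y C ((0 : Vb), b) := by
    intro X Y C b
    have h := hPop X Y C ((0 : Vb), b)
    rw [hgV] at h
    rw [gfs]
    simpa [gb0r] using h

  -- scalar manipulation helpers
  have Rbsm : ∀ (c : ℝ) (u y z w : Vb), Rb (c • u) y z w = c * Rb u y z w := by
    intro c u y z w
    simpa [smul_eq_mul] using (Rb1 y z w).map_smul c u
  have gfsm' : ∀ (c : ℝ) (b u : Vf), gf b (c • u) = c * gf u b := by
    intro c b u
    rw [gfs]
    simpa [smul_eq_mul] using (gfl b).map_smul c u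
  have gfneg' : ∀ (b u : Vf), gf b (-u) = -gf b u := by
    intro b u
    rw [gfs, (gfl b).map_neg, gfs]
  have hTv : ∀ (x y z w : Vb), T x (Rbop z w y) = -Rb (Tsh x) y z w := by
    intro x y z w
    rw [← hTsh, gbs, hRbop, Rbp z w y (Tsh x), Rba12 y (Tsh x) z w]
  have hgv : ∀ (x y z w : Vb), gb x (Rbop z w y) = -Rb x y z w := by
    intro x y z w
    rw [gbs, hRbop, Rbp z w y x, Rba12 y x z w]
  have L56 : ∀ (X Y C : Vb × Vf) (y z w : Vb),
      Rb (Pop X Y C).1 y z w = -PV X Y C (Rbop z w y, (0 : Vf)) := by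
    intro X Y C y z w
    rw [L5, L6]
  have L7' : ∀ (X Y C : Vb × Vf) (b : Vf),
      gf b (Pop X Y C).2 = (1 / f) * PV X Y C ((0 : Vb), b) := by
    intro X Y C b
    rw [← L7 X Y C b]
    field_simp
  -- PV expansions
  have PVa : ∀ (x y z w : Vb) (a b : Vf),
      PV (x, (0 : Vf)) ((0 : Vb), a) ((0 : Vb), b) (Rbop z w y, (0 : Vf))
        = f * (Rb (Tsh x) y z w * gf a b)
          + (1 / (((p + q : ℕ) : ℝ) - 2)) * ((Sf a b + Ω * gf a b) * Rb x y z w) := by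
    intro x y z w a b
    simp only [hPV, hRV, hSV, hgV, WPS.Gten]
    simp only [gb0l, gb0r, gf0l, gf0r, T0l, T0r, Rb01, Rb02, Rb03, Rb04,
      Rf01, Rf02, Rf03, Rf04, Sb0l, Sb0r, Sf0l, Sf0r,
      mul_zero, zero_mul, add_zero, zero_add, sub_zero, zero_sub, neg_zero]
    rw [hTv, hgv]
    ring
  have PVz : ∀ (x z : Vb) (a b : Vf),
      PV (x, (0 : Vf)) ((0 : Vb), a) (z, (0 : Vf)) ((0 : Vb), b)
        = f * (T x z * gf a b)
          + (1 / (((p + q : ℕ) : ℝ) - 2)) * ((Sb x z - (q : ℝ) * T x z) * (f * gf a b)) := by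
    intro x z a b
    simp only [hPV, hRV, hSV, hgV, WPS.Gten]
    simp only [gb0l, gb0r, gf0l, gf0r, T0l, T0r, Rb01, Rb02, Rb03, Rb04,
      Rf01, Rf02, Rf03, Rf04, Sb0l, Sb0r, Sf0l, Sf0r,
      mul_zero, zero_mul, add_zero, zero_add, sub_zero, zero_sub, neg_zero]
    ring

  -- the key proportionality identity
  have key : ∀ (x y z w : Vb) (a b a' b' : Vf),
      Sf a b * gf a' b' * Rb x y z w = Sf a' b' * gf a b * Rb x y z w := by
    intro x y z w a b a' b'
    have hc0 : (1 / (((p + q : ℕ) : ℝ) - 2)) ≠ 0 := by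
      have : (3 : ℝ) ≤ ((p + q : ℕ) : ℝ) := by exact_mod_cast hn
      have h2 : ((p + q : ℕ) : ℝ) - 2 ≠ 0 := by linarith
      simpa using h2
    have H := hmain ((0 : Vb), b) (y, (0 : Vf)) (z, (0 : Vf)) (w, (0 : Vf))
      (x, (0 : Vf)) ((0 : Vb), a)
    have H' := hmain ((0 : Vb), b') (y, (0 : Vf)) (z, (0 : Vf)) (w, (0 : Vf))
      (x, (0 : Vf)) ((0 : Vb), a')
    simp only [WPS.dot4, WPS.Q4, WPS.wedge, hgV, L1, L2, L3, L4, L56, L7',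
      gb0l, gb0r, gf0l, gf0r, T0l, T0r,
      Prod.smul_mk, Prod.mk_sub_mk, Prod.neg_mk, smul_zero, zero_smul, neg_zero,
      mul_zero, zero_mul, add_zero, zero_add, sub_zero, zero_sub, neg_neg,
      PVa, PVz, Rbsm, gfsm', gfneg'] at H H'
    have cEq : (1 / (((p + q : ℕ) : ℝ) - 2)) * (Sf a b * gf a' b' * Rb x y z w)
        = (1 / (((p + q : ℕ) : ℝ) - 2)) * (Sf a' b' * gf a b * Rb x y z w) := by
      linear_combination gf a' b' * H - gf a b * H'
    exact mul_left_cancel₀ hc0 cEq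

  by_cases hflat : ∀ x y z w : Vb, Rb x y z w = 0
  · exact Or.inl hflat
  · right
    push_neg at hflat
    obtain ⟨x, y, z, w, hr⟩ := hflat
    have hprop : ∀ a b a' b' : Vf, Sf a b * gf a' b' = Sf a' b' * gf a b := by
      intro a b a' b'
      exact mul_right_cancel₀ hr (key x y z w a b a' b')
    -- find a nonzero value of gf
    have hnt : Nontrivial Vf := by
      have : 0 < Module.finrank ℝ Vf := by omega
      exact Module.finrank_pos_iff.mp this
    obtain ⟨a0, ha0⟩ := exists_ne (0 : Vf)
    have hb0 : ∃ b0, gf a0 b0 ≠ 0 := by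
      by_contra h
      push_neg at h
      exact ha0 (hgfn a0 h)
    obtain ⟨b0, hg0⟩ := hb0
    set lam : ℝ := Sf a0 b0 / gf a0 b0 with hlam
    have hSflam : ∀ a b, Sf a b = lam * gf a b := by
      intro a b
      have h := hprop a b a0 b0
      rw [hlam, div_mul_eq_mul_div, eq_div_iff hg0]
      linear_combination h
    -- compute κf
    obtain ⟨E, hE, hk⟩ := hκf
    have hEeq : E = lam • (LinearMap.id : Vf →ₗ[ℝ] Vf) := by
      apply LinearMap.ext
      intro u
      apply sub_eq_zero.mp
      refine hgfn _ (fun v => ?_)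
      have hsub : gf (E u - lam • u) v = gf (E u) v - lam * gf u v := by
        rw [(gfl v).map_sub]
        have := (gfl v).map_smul lam u
        simp [smul_eq_mul] at this
        rw [this]
      simp only [LinearMap.smul_apply, LinearMap.id_coe, id_eq]
      rw [hsub, hE, hSflam u v]
      ring
    have hkq : κf = lam * (q : ℝ) := by
      rw [hk, hEeq, map_smul, LinearMap.trace_id, hdf]
      simp [smul_eq_mul]
    have hq0 : (q : ℝ) ≠ 0 := by
      have hqn : q ≠ 0 := by omega
      exact_mod_cast hqn
    intro a b
    rw [hSflam a b, hkq]
    field_simp
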